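/- Tangential cone estimate from a uniform operator bound: in the setting of the previous identity, if ‖B(p)⁻¹ B'(h)‖_{X→X} ≤ C‖h‖_P, then ‖S(p+h) − S(p) − S'(p)h‖_X ≤ C ‖h‖_P ‖S(p+h) − S(p)‖_X. -/

import Mathlib

/-- Tangential cone estimate from a uniform operator bound.  In the setting of
the second-order remainder identity (affine family `p ↦ B(p) ∈ L(X, X*)`, invertible at `p`
and `p+h`, `S(p) = B(p)⁻¹f`, `B'(h) = B(p+h) − B(p)`, `S'(p)h = −B(p)⁻¹ B'(h) S(p)`), if
`‖B(p)⁻¹ B'(h)‖_{X→X} ≤ C‖h‖_P`, then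
`‖S(p+h) − S(p) − S'(p)h‖_X ≤ C ‖h‖_P ‖S(p+h) − S(p)‖_X`. -/
theorem stmt_6
    {P X Xd : Type*} [NormedAddCommGroup P] [NormedSpace ℝ P]
    [NormedAddCommGroup X] [NormedSpace ℝ X] [CompleteSpace X]
    [NormedAddCommGroup Xd] [NormedSpace ℝ Xd] [CompleteSpace Xd]
    (B : P → (X →L[ℝ] Xd))
    (hAffine : ∀ p q h : P, B (p + h) - B p = B (q + h) - B q)
    (p h : P) (f : Xd) (C : ℝ) (hC : 0 < C)
    (Ep Eph : X ≃L[ℝ] Xd)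
    (hEp : (Ep : X →L[ℝ] Xd) = B p)
    (hEph : (Eph : X →L[ℝ] Xd) = B (p + h))
    (hbound : ∀ x : X, ‖Ep.symm ((B (p + h) - B p) x)‖ ≤ C * ‖h‖ * ‖x‖) :
    ‖Eph.symm f - Ep.symm f - (-(Ep.symm ((B (p + h) - B p) (Ep.symm f))))‖ ≤
      C * ‖h‖ * ‖Eph.symm f - Ep.symm f‖ := by
  set u := Eph.symm f with hu
  set v := Ep.symm f with hv
  have hBpv : B p v = f := by rw [← hEp]; exact Ep.apply_symm_apply f
  have hBphu : B (p + h) u = f := by rw [← hEph]; exact Eph.apply_symm_apply f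
  have key : u - v - (-(Ep.symm ((B (p + h) - B p) v)))
      = -(Ep.symm ((B (p + h) - B p) (u - v))) := by
    apply Ep.injective
    have hE : ∀ x : X, Ep x = B p x := fun x => by rw [← hEp]; rfl
    have hEs : ∀ x : X, Ep.symm (B p x) = x := fun x => by rw [← hEp]; exact Ep.symm_apply_apply x
    simp only [map_sub, map_neg, ContinuousLinearEquiv.apply_symm_apply, hE, hEs,
      ContinuousLinearMap.sub_apply, map_sub, hBpv, hBphu]
    rw [← hv, hBpv]
    abel
  rw [key, norm_neg]
  exact hbound (u - v)
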